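/- Let f be a germ of a holomorphic diffeomorphism of (ℂ,0) of the form f(z) = z + a z^{l+1} + higher order terms with a ≠ 0 (l ≥ 1). Then for every positive integer k and every neighborhood V of 0 there exists a closed disk D ⊆ V centered at 0 such that every point p ∈ D \ {0} has at least k distinct iterates f^0(p), f^1(p), …, i.e., the orbit of p has cardinality at least k. -/

import Mathlib

open Filter Metric Function

/-- Near a parabolic fixed point (a germ tangent to the identity but not the
identity), orbits of points arbitrarily close to `0` have arbitrarily large
cardinality: for every `k` and every neighborhood `V` of `0` there is a closed
disk `D ⊆ V` centered at `0` such that every `p ∈ D \ {0}` has at least `k`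
distinct iterates. -/
theorem parabolic_germ_orbits_large
    (f : ℂ → ℂ) (hf : AnalyticAt ℂ f 0) (hf0 : f 0 = 0)
    (hf' : deriv f 0 = 1) (hfid : ¬ (f =ᶠ[nhds (0 : ℂ)] id)) :
    ∀ k : ℕ, 0 < k → ∀ V ∈ nhds (0 : ℂ), ∃ r : ℝ, 0 < r ∧
      Metric.closedBall (0 : ℂ) r ⊆ V ∧
      ∀ p ∈ Metric.closedBall (0 : ℂ) r, p ≠ 0 →
        ∃ s : Finset ℂ, s.card = k ∧ ↑s ⊆ Set.range fun n : ℕ => f^[n] p := by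
  intro k hk V hV
  -- the difference `g = f - id` is analytic, not eventually zero, so it has a
  -- representation `f z - z = z ^ n * h z` with `h 0 ≠ 0`.
  have hg : AnalyticAt ℂ (fun z => f z - z) 0 := hf.sub analyticAt_id
  have hgne : ¬ ∀ᶠ z in nhds (0 : ℂ), f z - z = 0 := by
    intro hev
    exact hfid (hev.mono fun z hz => by simpa [sub_eq_zero] using hz)
  obtain ⟨n, h, hh_an, hh0, hh_eq⟩ :=
    (hg.exists_eventuallyEq_pow_smul_nonzero_iff).mpr hgne
  have hh_eq' : ∀ᶠ z in nhds (0 : ℂ), f z = z + z ^ n * h z := by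
    filter_upwards [hh_eq] with z hz
    have h1 : f z - z = z ^ n * h z := by simpa [smul_eq_mul] using hz
    linear_combination h1
  -- Lemma A: `f^[i] z / z → 1` along the punctured neighborhood of `0`.
  have base : Filter.Tendsto (fun z : ℂ => f z / z) (nhdsWithin 0 {0}ᶜ) (nhds 1) := by
    have hd : HasDerivAt f 1 0 := by
      have := hf.differentiableAt.hasDerivAt
      rwa [hf'] at this
    have := hasDerivAt_iff_tendsto_slope.mp hd
    refine this.congr' ?_
    filter_upwards [self_mem_nhdsWithin] with z hz
    simp [slope_def_field, hf0]
  have ratio : ∀ i : ℕ,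
      Filter.Tendsto (fun z : ℂ => f^[i] z / z) (nhdsWithin 0 {0}ᶜ) (nhds 1) := by
    intro i
    induction i with
    | zero =>
      refine tendsto_const_nhds.congr' ?_
      filter_upwards [self_mem_nhdsWithin] with z hz
      simp [div_self (show z ≠ 0 from hz)]
    | succ i ih =>
      have hne : ∀ᶠ z in nhdsWithin (0 : ℂ) {0}ᶜ, f^[i] z ≠ 0 := by
        filter_upwards [ih.eventually_ne one_ne_zero] with z hz
        intro h0; exact hz (by simp [h0])
      have hto0 : Filter.Tendsto (fun z : ℂ => f^[i] z) (nhdsWithin 0 {0}ᶜ) (nhds 0) := by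
        have : Filter.Tendsto (fun z : ℂ => (f^[i] z / z) * z) (nhdsWithin 0 {0}ᶜ) (nhds 0) := by
          have hz : Filter.Tendsto (fun z : ℂ => z) (nhdsWithin (0:ℂ) {0}ᶜ) (nhds 0) :=
            tendsto_id.mono_left nhdsWithin_le_nhds
          simpa using ih.mul hz
        refine this.congr' ?_
        filter_upwards [self_mem_nhdsWithin] with z hz
        exact div_mul_cancel₀ _ hz
      have hto : Filter.Tendsto (fun z : ℂ => f^[i] z)
          (nhdsWithin 0 {0}ᶜ) (nhdsWithin (0:ℂ) {0}ᶜ) := by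
        rw [tendsto_nhdsWithin_iff]
        exact ⟨hto0, hne⟩
      have comp : Filter.Tendsto (fun z : ℂ => f (f^[i] z) / f^[i] z)
          (nhdsWithin 0 {0}ᶜ) (nhds 1) := base.comp hto
      have := comp.mul ih
      rw [one_mul] at this
      refine this.congr' ?_
      filter_upwards [hne] with z hz
      rw [Function.iterate_succ_apply']
      field_simp
  have hne : ∀ i : ℕ, ∀ᶠ z in nhdsWithin (0 : ℂ) {0}ᶜ, f^[i] z ≠ 0 := by
    intro i
    filter_upwards [(ratio i).eventually_ne one_ne_zero] with z hz
    intro h0; exact hz (by simp [h0])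
  have hto : ∀ i : ℕ, Filter.Tendsto (fun z : ℂ => f^[i] z)
      (nhdsWithin 0 {0}ᶜ) (nhdsWithin (0:ℂ) {0}ᶜ) := by
    intro i
    rw [tendsto_nhdsWithin_iff]
    constructor
    · have hz : Filter.Tendsto (fun z : ℂ => z) (nhdsWithin (0:ℂ) {0}ᶜ) (nhds 0) :=
        tendsto_id.mono_left nhdsWithin_le_nhds
      have : Filter.Tendsto (fun z : ℂ => (f^[i] z / z) * z) (nhdsWithin 0 {0}ᶜ) (nhds 0) := by
        simpa using (ratio i).mul hz
      refine this.congr' ?_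
      filter_upwards [self_mem_nhdsWithin] with z hz
      exact div_mul_cancel₀ _ hz
    · exact hne i
  -- Lemma B: `(f^[m] z - z) / z ^ n → m * h 0`.
  have keyB : ∀ m : ℕ,
      Filter.Tendsto (fun z : ℂ => (f^[m] z - z) / z ^ n)
        (nhdsWithin 0 {0}ᶜ) (nhds (m * h 0)) := by
    intro m
    induction m with
    | zero =>
      simp only [Function.iterate_zero, id_eq, sub_self, zero_div, Nat.cast_zero, zero_mul]
      exact tendsto_const_nhds
    | succ m ih =>
      have hcomp : Filter.Tendsto (fun z : ℂ => h (f^[m] z))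
          (nhdsWithin 0 {0}ᶜ) (nhds (h 0)) :=
        (hh_an.continuousAt.tendsto).comp (((hto m).mono_right nhdsWithin_le_nhds))
      have hpow : Filter.Tendsto (fun z : ℂ => (f^[m] z / z) ^ n)
          (nhdsWithin 0 {0}ᶜ) (nhds 1) := by
        simpa using (ratio m).pow n
      have hsum := ih.add (hpow.mul hcomp)
      rw [one_mul] at hsum
      have heq : ∀ᶠ z in nhdsWithin (0 : ℂ) {0}ᶜ,
          (f^[m] z - z) / z ^ n + (f^[m] z / z) ^ n * h (f^[m] z)
            = (f^[m+1] z - z) / z ^ n := by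
        have hrep : ∀ᶠ z in nhdsWithin (0 : ℂ) {0}ᶜ,
            f (f^[m] z) = f^[m] z + (f^[m] z) ^ n * h (f^[m] z) :=
          ((hto m).mono_right nhdsWithin_le_nhds).eventually hh_eq'
        filter_upwards [hrep, self_mem_nhdsWithin] with z hz hz0
        have hz0' : (z : ℂ) ≠ 0 := hz0
        rw [Function.iterate_succ_apply', hz]
        rw [div_pow, div_mul_eq_mul_div, ← add_div, div_left_inj' (pow_ne_zero _ hz0')]
        ring
      have hcast : ((m + 1 : ℕ) : ℂ) * h 0 = ↑m * h 0 + h 0 := by push_cast; ring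
      rw [hcast]
      exact hsum.congr' heq
  -- eventually along the punctured neighborhood, no periodic points of period `< k`
  have noper : ∀ m : ℕ, 1 ≤ m → ∀ᶠ z in nhdsWithin (0 : ℂ) {0}ᶜ, f^[m] z ≠ z := by
    intro m hm
    have hma : (m : ℂ) * h 0 ≠ 0 :=
      mul_ne_zero (Nat.cast_ne_zero.mpr (by omega)) hh0
    filter_upwards [(keyB m).eventually_ne hma, self_mem_nhdsWithin] with z hz hz0
    intro heq
    exact hz (by simp [heq])
  have big : ∀ᶠ z in nhdsWithin (0 : ℂ) {0}ᶜ,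
      f z ≠ 0 ∧ ∀ m ∈ Finset.Ico 1 k, f^[m] z ≠ z := by
    have h1 : ∀ᶠ z in nhdsWithin (0 : ℂ) {0}ᶜ, f z ≠ 0 := by
      have := hne 1
      simpa using this
    refine h1.and ?_
    rw [Filter.eventually_all_finset]
    intro m hm
    exact noper m (Finset.mem_Ico.mp hm).1
  -- extract a closed ball on which the above properties hold
  obtain ⟨U, hUopen, hU0, hUsub⟩ := mem_nhdsWithin.mp big
  obtain ⟨ε, hε, hball⟩ := Metric.mem_nhds_iff.mp (hUopen.mem_nhds hU0)
  obtain ⟨rV, hrV, hrVsub⟩ := Metric.nhds_basis_closedBall.mem_iff.mp hV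
  set ρ : ℝ := min (ε / 2) rV with hρ_def
  have hρpos : 0 < ρ := lt_min (by linarith) hrV
  have hρV : Metric.closedBall (0 : ℂ) ρ ⊆ V :=
    (Metric.closedBall_subset_closedBall (min_le_right _ _)).trans hrVsub
  have hP : ∀ z : ℂ, z ∈ Metric.closedBall (0 : ℂ) ρ → z ≠ 0 →
      f z ≠ 0 ∧ ∀ m ∈ Finset.Ico 1 k, f^[m] z ≠ z := by
    intro z hz hz0
    apply hUsub
    constructor
    · apply hball
      rw [Metric.mem_closedBall] at hz
      rw [Metric.mem_ball]
      calc dist z 0 ≤ ρ := hz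
        _ ≤ ε / 2 := min_le_left _ _
        _ < ε := by linarith
    · exact hz0
  -- a decreasing chain of radii keeping the first `k` iterates inside `closedBall ρ`
  have chain : ∀ j : ℕ, ∃ r : ℝ, 0 < r ∧ r ≤ ρ ∧
      ∀ z ∈ Metric.closedBall (0 : ℂ) r, ∀ i ≤ j,
        f^[i] z ∈ Metric.closedBall (0 : ℂ) ρ := by
    intro j
    induction j with
    | zero =>
      refine ⟨ρ, hρpos, le_refl _, fun z hz i hi => ?_⟩
      interval_cases i
      simpa using hz
    | succ j ih =>
      obtain ⟨r, hr, hrρ, hiter⟩ := ih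
      have hpre : f ⁻¹' Metric.closedBall (0 : ℂ) r ∈ nhds (0 : ℂ) := by
        apply hf.continuousAt.preimage_mem_nhds
        rw [hf0] at *
        exact Metric.closedBall_mem_nhds _ hr
      obtain ⟨r', hr', hr'sub⟩ := Metric.nhds_basis_closedBall.mem_iff.mp hpre
      refine ⟨min r' r, lt_min hr' hr, (min_le_right _ _).trans hrρ, ?_⟩
      intro z hz i hi
      match i with
      | 0 =>
        simp only [Function.iterate_zero, id_eq]
        exact Metric.closedBall_subset_closedBall ((min_le_right _ _).trans hrρ) hz
      | Nat.succ i =>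
        rw [Function.iterate_succ_apply]
        apply hiter
        · exact hr'sub (Metric.closedBall_subset_closedBall (min_le_left _ _) hz)
        · omega
  obtain ⟨r, hr, hrρ, hiter⟩ := chain (k - 1)
  refine ⟨r, hr, (Metric.closedBall_subset_closedBall hrρ).trans hρV, ?_⟩
  intro p hp hp0
  -- all iterates up to `k-1` stay in `closedBall ρ` and are nonzero
  have hmem : ∀ i, i ≤ k - 1 → f^[i] p ∈ Metric.closedBall (0 : ℂ) ρ :=
    fun i hi => hiter p hp i hi
  have hnz : ∀ i, i ≤ k - 1 → f^[i] p ≠ 0 := by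
    intro i
    induction i with
    | zero => intro _; simpa using hp0
    | succ i ih =>
      intro hi
      rw [Function.iterate_succ_apply']
      exact (hP _ (hmem i (by omega)) (ih (by omega))).1
  -- the first `k` iterates are pairwise distinct
  have hinj : ∀ i j, i < j → j ≤ k - 1 → f^[i] p ≠ f^[j] p := by
    intro i j hij hj heq
    have hq := hP (f^[i] p) (hmem i (by omega)) (hnz i (by omega))
    have hji : f^[j] p = f^[j - i] (f^[i] p) := by
      rw [← Function.iterate_add_apply]
      congr 1
      omega
    apply hq.2 (j - i) (Finset.mem_Ico.mpr ⟨by omega, by omega⟩)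
    rw [← hji, ← heq]
  refine ⟨(Finset.range k).image (fun i => f^[i] p), ?_, ?_⟩
  · rw [Finset.card_image_of_injOn, Finset.card_range]
    intro i hi j hj hij
    simp only [Finset.coe_range, Set.mem_Iio] at hi hj
    by_contra hne'
    rcases Nat.lt_or_ge i j with hlt | hge
    · exact hinj i j hlt (by omega) hij
    · exact hinj j i (by omega) (by omega) hij.symm
  · intro x hx
    simp only [Finset.coe_image, Finset.coe_range, Set.mem_image, Set.mem_Iio] at hx
    obtain ⟨i, _, hi⟩ := hx
    exact ⟨i, hi⟩
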